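/- Fix a channel coefficient h ∈ ℂ with h ≠ 0, and set f_opt = (1 + σw²/(σx²·|h|²)) · x/‖x‖². Then f_opt is a global minimizer of the zeroth-order symbol-estimate MSE: for every nonzero filter f ∈ ℂ^B, M_dc(f_opt) ≤ M_dc(f). -/

import Mathlib

open MeasureTheory

/-- `φ(f) = fᴴ x = Σᵢ conj(fᵢ)·xᵢ`. -/
noncomputable def phi {B : ℕ} (x f : Fin B → ℂ) : ℂ :=
  ∑ i, (starRingEnd ℂ) (f i) * x i

/-- Squared Euclidean norm `‖f‖² = Σᵢ |fᵢ|²`. -/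
noncomputable def nsq {B : ℕ} (f : Fin B → ℂ) : ℝ :=
  ∑ i, Complex.normSq (f i)

/-- Zeroth-order symbol-estimate MSE of the ZF equalizer, deterministic channel `h`. -/
noncomputable def Mdc {B : ℕ} (σx2 σw2 : ℝ) (h : ℂ) (x f : Fin B → ℂ) : ℝ :=
  (σx2 * (Complex.normSq h * Complex.normSq (phi x f - 1) + σw2 * nsq f) + σw2) /
    (Complex.normSq h * Complex.normSq (phi x f) + σw2 * nsq f)

/-- The optimal filter `f_opt = (1 + σw²/(σx²·|h|²)) · x/‖x‖²`. -/
noncomputable def fOptDc {B : ℕ} (σx2 σw2 : ℝ) (h : ℂ) (x : Fin B → ℂ) : Fin B → ℂ :=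
  fun i => ((1 + σw2 / (σx2 * Complex.normSq h) : ℝ) : ℂ) * (x i / (nsq x : ℂ))

lemma nsq_nonneg' {B : ℕ} (f : Fin B → ℂ) : 0 ≤ nsq f :=
  Finset.sum_nonneg fun _ _ => Complex.normSq_nonneg _

lemma nsq_pos' {B : ℕ} {f : Fin B → ℂ} (hf : f ≠ 0) : 0 < nsq f := by
  rcases (nsq_nonneg' f).lt_or_eq with h | h
  · exact h
  · exfalso; apply hf
    funext i
    have := (Finset.sum_eq_zero_iff_of_nonneg
      (fun i _ => Complex.normSq_nonneg (f i))).mp h.symm i (Finset.mem_univ i)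
    simpa using Complex.normSq_eq_zero.mp this

lemma euc_norm' {B : ℕ} (f : Fin B → ℂ) :
    ‖(WithLp.equiv 2 (Fin B → ℂ)).symm f‖ = Real.sqrt (nsq f) := by
  rw [EuclideanSpace.norm_eq, nsq]
  congr 1
  apply Finset.sum_congr rfl
  intro i _
  rw [Complex.normSq_eq_norm_sq]
  rfl

lemma cs' {B : ℕ} (x f : Fin B → ℂ) : Complex.normSq (phi x f) ≤ nsq f * nsq x := by
  have h := norm_inner_le_norm (𝕜 := ℂ)
    ((WithLp.equiv 2 (Fin B → ℂ)).symm f) ((WithLp.equiv 2 (Fin B → ℂ)).symm x)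
  have hi : (inner ℂ ((WithLp.equiv 2 (Fin B → ℂ)).symm f)
      ((WithLp.equiv 2 (Fin B → ℂ)).symm x) : ℂ) = phi x f := by
    simp [PiLp.inner_apply, phi, RCLike.inner_apply, mul_comm]
  rw [hi, euc_norm', euc_norm'] at h
  have h2 : ‖phi x f‖ ^ 2 ≤ (Real.sqrt (nsq f) * Real.sqrt (nsq x)) ^ 2 := by
    have := norm_nonneg (phi x f)
    nlinarith
  rw [mul_pow, Real.sq_sqrt (nsq_nonneg' f), Real.sq_sqrt (nsq_nonneg' x)] at h2
  calc Complex.normSq (phi x f) = ‖phi x f‖ ^ 2 := by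
        rw [Complex.normSq_eq_norm_sq]
    _ ≤ _ := h2

lemma phi_fopt' {B : ℕ} (σx2 σw2 : ℝ) (h : ℂ) (x : Fin B → ℂ) (hE : nsq x ≠ 0) :
    phi x (fOptDc σx2 σw2 h x) = ((1 + σw2 / (σx2 * Complex.normSq h) : ℝ) : ℂ) := by
  set c : ℝ := 1 + σw2 / (σx2 * Complex.normSq h)
  have key : phi x (fOptDc σx2 σw2 h x)
      = (c : ℂ) * ((nsq x : ℂ))⁻¹ * ∑ i, (Complex.normSq (x i) : ℂ) := by
    rw [phi, Finset.mul_sum]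
    apply Finset.sum_congr rfl
    intro i _
    have h1 : (starRingEnd ℂ) (fOptDc σx2 σw2 h x i) * x i
        = (c : ℂ) * ((nsq x : ℂ))⁻¹ * ((starRingEnd ℂ) (x i) * x i) := by
      rw [fOptDc]
      simp only [map_mul, map_div₀, Complex.conj_ofReal]
      ring
    rw [h1, mul_comm ((starRingEnd ℂ) (x i)) (x i), Complex.mul_conj]
  rw [key]
  have h2 : (∑ i, (Complex.normSq (x i) : ℂ)) = ((nsq x : ℝ) : ℂ) := by
    rw [nsq]; push_cast; ring
  rw [h2, mul_assoc, inv_mul_cancel₀ (by exact_mod_cast hE), mul_one]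

lemma nsq_fopt' {B : ℕ} (σx2 σw2 : ℝ) (h : ℂ) (x : Fin B → ℂ) (hE : nsq x ≠ 0) :
    nsq (fOptDc σx2 σw2 h x) = (1 + σw2 / (σx2 * Complex.normSq h))^2 / nsq x := by
  set c : ℝ := 1 + σw2 / (σx2 * Complex.normSq h)
  have key : nsq (fOptDc σx2 σw2 h x) = c^2 / (nsq x)^2 * ∑ i, Complex.normSq (x i) := by
    rw [nsq, Finset.mul_sum]
    apply Finset.sum_congr rfl
    intro i _
    rw [fOptDc, Complex.normSq_mul, Complex.normSq_div, Complex.normSq_ofReal,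
      Complex.normSq_ofReal]
    ring
  rw [key, show (∑ i, Complex.normSq (x i)) = nsq x from rfl]
  field_simp

lemma key_ineq (a E n q r σx2 σw2 : ℝ) (ha : 0 < a) (hE : 0 < E) (hn : 0 < n)
    (hσx : 0 < σx2) (hσw : 0 < σw2) (hq : q ≤ n * E) (hr : r^2 ≤ q) :
    (σw2*σx2*(a*E + σx2*a + σw2)) / ((σx2*a + σw2)*(a*E + σw2))
      ≤ (σx2*(a*(q - 2*r + 1) + σw2*n) + σw2) / (a*q + σw2*n) := by
  have hq0 : 0 ≤ q := le_trans (sq_nonneg r) hr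
  have hd1 : 0 < (σx2*a + σw2)*(a*E + σw2) := by positivity
  have hd2 : 0 < a*q + σw2*n := by positivity
  rw [div_le_div_iff₀ hd1 hd2]
  nlinarith [mul_nonneg (mul_nonneg hσw.le (sq_nonneg (σx2*a))) (by linarith : (0:ℝ) ≤ n*E - q),
    mul_nonneg (by positivity : (0:ℝ) ≤ a*E + σw2) (sq_nonneg (σx2*a*r - (σx2*a + σw2))),
    mul_nonneg (mul_nonneg (by positivity : (0:ℝ) ≤ a*E + σw2) (sq_nonneg (σx2*a)))
      (by linarith : (0:ℝ) ≤ q - r^2)]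

/-- `f_opt = (1 + σw²/(σx²·|h|²)) · x/‖x‖²` is a global minimizer of the
zeroth-order symbol-estimate MSE `[MSE_x^dc(ZF)]₀`. -/
theorem fopt_optimal_zeroth_order_dc_mse
    (B : ℕ) (hB : 1 ≤ B) (x : Fin B → ℂ) (hx : x ≠ 0)
    (σx2 σw2 : ℝ) (hσx : 0 < σx2) (hσw : 0 < σw2)
    (h : ℂ) (hh : h ≠ 0) :
    ∀ f : Fin B → ℂ, f ≠ 0 →
      Mdc σx2 σw2 h x (fOptDc σx2 σw2 h x) ≤ Mdc σx2 σw2 h x f := by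
  intro f hf
  set a : ℝ := Complex.normSq h with ha_def
  have ha : 0 < a := Complex.normSq_pos.mpr hh
  have hE : 0 < nsq x := nsq_pos' hx
  have hn : 0 < nsq f := nsq_pos' hf
  set E : ℝ := nsq x with hE_def
  set c : ℝ := 1 + σw2 / (σx2 * a) with hc_def
  have hc : 0 < c := by positivity
  -- value of Mdc at fOpt
  have hMopt : Mdc σx2 σw2 h x (fOptDc σx2 σw2 h x)
      = (σw2*σx2*(a*E + σx2*a + σw2)) / ((σx2*a + σw2)*(a*E + σw2)) := by
    rw [Mdc, phi_fopt' σx2 σw2 h x hE.ne', nsq_fopt' σx2 σw2 h x hE.ne']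
    rw [show ((c:ℝ):ℂ) - 1 = ((c - 1 : ℝ) : ℂ) by push_cast; ring]
    rw [Complex.normSq_ofReal, Complex.normSq_ofReal]
    rw [hc_def]
    rw [← ha_def, ← hE_def]
    rw [div_eq_div_iff (by positivity) (by positivity)]
    field_simp
    ring
  rw [hMopt, Mdc]
  have hdiff : Complex.normSq (phi x f - 1)
      = Complex.normSq (phi x f) - 2*(phi x f).re + 1 := by
    simp only [Complex.normSq_apply, Complex.sub_re, Complex.sub_im,
      Complex.one_re, Complex.one_im]
    ring
  have hr : (phi x f).re ^ 2 ≤ Complex.normSq (phi x f) := by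
    rw [Complex.normSq_apply]
    nlinarith [sq_nonneg (phi x f).im]
  rw [hdiff]
  exact key_ineq a E (nsq f) (Complex.normSq (phi x f)) ((phi x f).re) σx2 σw2
    ha hE hn hσx hσw (by rw [hE_def]; exact cs' x f) hr
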